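/- Let p be a prime, v : ℤ_p → ℤ_p a 1-Lipschitz (compatible) function, and c ∈ ℤ_p with c not divisible by p. Then the function h(x) = c + x + p·(v(x+1) - v(x)) is transitive modulo p^k for every k ≥ 1, i.e., it induces a single-cycle permutation on ℤ/p^k ℤ. -/

import Mathlib

/-- A function on the `p`-adic integers is *compatible* if it is 1-Lipschitz. -/
def IsCompatible {p : ℕ} [Fact p.Prime] (f : ℤ_[p] → ℤ_[p]) : Prop :=
  ∀ x y : ℤ_[p], ‖f x - f y‖ ≤ ‖x - y‖

/-- `f` is transitive modulo `p^k`: it induces a single-cycle permutation of `ZMod (p^k)`. -/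
def TransitiveMod {p : ℕ} [Fact p.Prime] (f : ℤ_[p] → ℤ_[p]) (k : ℕ) : Prop :=
  ∃ g : ZMod (p ^ k) → ZMod (p ^ k),
    (∀ x : ℤ_[p], g (PadicInt.toZModPow k x) = PadicInt.toZModPow k (f x)) ∧
    ∀ a b : ZMod (p ^ k), ∃ m : ℕ, g^[m] a = b

section Aux

variable {p : ℕ} [hp : Fact p.Prime]

private lemma dvd_iff_toZModPow_eq (k : ℕ) (x y : ℤ_[p]) :
    (p : ℤ_[p])^k ∣ x - y ↔ PadicInt.toZModPow k x = PadicInt.toZModPow k y := by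
  rw [← sub_eq_zero, ← map_sub, ← RingHom.mem_ker, PadicInt.ker_toZModPow,
    Ideal.mem_span_singleton]

private lemma compat_dvd {v : ℤ_[p] → ℤ_[p]} (hv : IsCompatible v) (k : ℕ) {x y : ℤ_[p]}
    (h : (p:ℤ_[p])^k ∣ x - y) : (p:ℤ_[p])^k ∣ v x - v y := by
  rw [← Ideal.mem_span_singleton, ← PadicInt.norm_le_pow_iff_mem_span_pow] at h ⊢
  exact le_trans (hv x y) h

/-- The function under study. -/
private noncomputable def ff (v : ℤ_[p] → ℤ_[p]) (c : ℤ_[p]) (x : ℤ_[p]) : ℤ_[p] :=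
  c + x + p * (v (x + 1) - v x)

private lemma ff_compat {v : ℤ_[p] → ℤ_[p]} (hv : IsCompatible v) (c : ℤ_[p]) (k : ℕ)
    {x y : ℤ_[p]} (h : (p:ℤ_[p])^k ∣ x - y) : (p:ℤ_[p])^k ∣ ff v c x - ff v c y := by
  have h1 : (p:ℤ_[p])^k ∣ v (x+1) - v (y+1) := compat_dvd hv k (by simpa using h)
  have h2 : (p:ℤ_[p])^k ∣ v x - v y := compat_dvd hv k h
  have he : ff v c x - ff v c y
      = (x - y) + p * ((v (x+1) - v (y+1)) - (v x - v y)) := by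
    simp only [ff]; ring
  rw [he]
  exact dvd_add h ((dvd_sub h1 h2).mul_left p)

/-- The induced map modulo `p^k`. -/
private noncomputable def gf (v : ℤ_[p] → ℤ_[p]) (c : ℤ_[p]) (k : ℕ)
    (a : ZMod (p^k)) : ZMod (p^k) :=
  PadicInt.toZModPow k (ff v c ((a.val : ℤ_[p])))

private lemma lift_spec (k : ℕ) (a : ZMod (p^k)) :
    PadicInt.toZModPow k ((a.val : ℤ_[p])) = a := by
  rw [map_natCast]
  exact ZMod.natCast_rightInverse a

private lemma gf_spec {v : ℤ_[p] → ℤ_[p]} (hv : IsCompatible v) (c : ℤ_[p]) (k : ℕ)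
    (x : ℤ_[p]) : gf v c k (PadicInt.toZModPow k x) = PadicInt.toZModPow k (ff v c x) := by
  unfold gf
  rw [← dvd_iff_toZModPow_eq]
  exact ff_compat hv c k (by rw [dvd_iff_toZModPow_eq, lift_spec])

private lemma gf_iter {v : ℤ_[p] → ℤ_[p]} (hv : IsCompatible v) (c : ℤ_[p]) (k : ℕ)
    (m : ℕ) (x : ℤ_[p]) :
    (gf v c k)^[m] (PadicInt.toZModPow k x) = PadicInt.toZModPow k ((ff v c)^[m] x) := by
  induction m with
  | zero => rfl
  | succ m ih =>
    rw [Function.iterate_succ_apply', Function.iterate_succ_apply', ih, gf_spec hv]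

/-- Iterate formula. -/
private lemma ff_iter_eq (v : ℤ_[p] → ℤ_[p]) (c : ℤ_[p]) (n : ℕ) (x : ℤ_[p]) :
    (ff v c)^[n] x = x + n * c
      + p * ∑ i ∈ Finset.range n, (v ((ff v c)^[i] x + 1) - v ((ff v c)^[i] x)) := by
  induction n with
  | zero => simp
  | succ n ih =>
    rw [Function.iterate_succ_apply', Finset.sum_range_succ]
    show ff v c ((ff v c)^[n] x) = _
    rw [ff, ih]
    push_cast
    ring

/-- Bounded reachability for a transitive map on a finite type. -/
private lemma reach_lt {β : Type*} [Fintype β] [DecidableEq β] (g : β → β)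
    (htr : ∀ a b : β, ∃ m : ℕ, g^[m] a = b) (a b : β) :
    ∃ i < Fintype.card β, g^[i] a = b := by
  have hsurj : Function.Surjective g := by
    intro b
    obtain ⟨m, hm⟩ := htr (g b) b
    exact ⟨g^[m] b, by rw [← Function.iterate_succ_apply' g m b, Function.iterate_succ_apply, hm]⟩
  have hinj : Function.Injective g := Finite.injective_iff_surjective.mpr hsurj
  set N := Fintype.card β with hN
  have main : ∀ i j : ℕ, i < j → j ≤ N → g^[i] a = g^[j] a → ∃ i' < N, g^[i'] a = b := by
    intro i j hlt hjN heq
    set d := j - i with hd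
    have hd0 : 0 < d := Nat.sub_pos_of_lt hlt
    have hdN : d ≤ N := le_trans (Nat.sub_le _ _) hjN
    have hper : g^[d] a = a := by
      have h2 : g^[i + d] a = g^[i] a := by
        rw [hd, Nat.add_sub_cancel' hlt.le]; exact heq.symm
      rw [Function.iterate_add_apply] at h2
      exact hinj.iterate i h2
    have hq : ∀ q : ℕ, g^[d * q] a = a := by
      intro q
      induction q with
      | zero => simp
      | succ q ihq => rw [Nat.mul_succ, Function.iterate_add_apply, hper, ihq]
    obtain ⟨m, hm⟩ := htr a b
    refine ⟨m % d, lt_of_lt_of_le (Nat.mod_lt _ hd0) hdN, ?_⟩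
    calc g^[m % d] a = g^[m % d] (g^[d * (m / d)] a) := by rw [hq]
      _ = g^[m % d + d * (m / d)] a := (Function.iterate_add_apply _ _ _ _).symm
      _ = g^[m] a := by rw [Nat.mod_add_div]
      _ = b := hm
  obtain ⟨i, j, hij, hfij⟩ := Fintype.exists_ne_map_eq_of_card_lt
    (fun i : Fin (N+1) => g^[(i : ℕ)] a) (by simp; exact le_rfl)
  rcases lt_or_gt_of_ne hij with h | h
  · exact main i j h (Nat.lt_succ_iff.mp j.isLt) hfij
  · exact main j i h (Nat.lt_succ_iff.mp i.isLt) hfij.symm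

/-- Key step: over a full cycle modulo `p^k`, the perturbation telescopes away. -/
private lemma key_step {v : ℤ_[p] → ℤ_[p]} (hv : IsCompatible v) (c : ℤ_[p]) (k : ℕ)
    (htr : ∀ a b : ZMod (p^k), ∃ m : ℕ, (gf v c k)^[m] a = b) (z : ℤ_[p]) :
    (p:ℤ_[p])^(k+1) ∣ (ff v c)^[p^k] z - (z + (p:ℤ_[p])^k * c) := by
  set n := p^k with hn
  set a0 := PadicInt.toZModPow k z with ha0
  have hcard : Fintype.card (ZMod (p^k)) = n := ZMod.card _
  have hreach : ∀ b : ZMod (p^k), ∃ i < n, (gf v c k)^[i] a0 = b := by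
    intro b
    obtain ⟨i, hi, he⟩ := reach_lt (gf v c k) htr a0 b
    exact ⟨i, by rwa [hcard] at hi, he⟩
  have hinjOn := Finset.inj_on_of_surj_on_of_card_le
      (s := Finset.range n) (t := (Finset.univ : Finset (ZMod (p^k))))
      (fun i _ => (gf v c k)^[i] a0)
      (fun i hi => Finset.mem_univ _)
      (fun b _ => by
        obtain ⟨i, hi, he⟩ := hreach b
        exact ⟨i, Finset.mem_range.mpr hi, he⟩)
      (by simp [hcard])
  set W : ZMod (p^k) → ℤ_[p] := fun a => v ((a.val : ℤ_[p]) + 1) - v ((a.val : ℤ_[p]))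
    with hW
  have hterm : ∀ i : ℕ,
      (p:ℤ_[p])^k ∣ (v ((ff v c)^[i] z + 1) - v ((ff v c)^[i] z))
        - W ((gf v c k)^[i] a0) := by
    intro i
    have h0 : (p:ℤ_[p])^k ∣ (ff v c)^[i] z - ((((gf v c k)^[i] a0).val : ℕ) : ℤ_[p]) := by
      rw [dvd_iff_toZModPow_eq, lift_spec, ha0, gf_iter hv]
    have h1 : (p:ℤ_[p])^k ∣ v ((ff v c)^[i] z + 1)
        - v (((((gf v c k)^[i] a0).val : ℕ) : ℤ_[p]) + 1) :=
      compat_dvd hv k (by simpa using h0)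
    have h2 := compat_dvd hv k h0
    have he : (v ((ff v c)^[i] z + 1) - v ((ff v c)^[i] z)) - W ((gf v c k)^[i] a0)
        = (v ((ff v c)^[i] z + 1) - v (((((gf v c k)^[i] a0).val : ℕ) : ℤ_[p]) + 1))
          - (v ((ff v c)^[i] z) - v ((((gf v c k)^[i] a0).val : ℕ) : ℤ_[p])) := by
      simp only [hW]; ring
    rw [he]
    exact dvd_sub h1 h2
  have hS1 : (p:ℤ_[p])^k ∣
      ∑ i ∈ Finset.range n, (v ((ff v c)^[i] z + 1) - v ((ff v c)^[i] z))
      - ∑ i ∈ Finset.range n, W ((gf v c k)^[i] a0) := by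
    rw [← Finset.sum_sub_distrib]
    exact Finset.dvd_sum (fun i _ => hterm i)
  have hS2 : ∑ i ∈ Finset.range n, W ((gf v c k)^[i] a0) = ∑ a : ZMod (p^k), W a := by
    refine Finset.sum_bij (fun i _ => (gf v c k)^[i] a0) (fun i _ => Finset.mem_univ _)
      (fun i hi i' hi' hii' => hinjOn hi hi' hii')
      (fun b _ => by
        obtain ⟨i, hi, he⟩ := hreach b
        exact ⟨i, Finset.mem_range.mpr hi, he⟩)
      (fun i _ => rfl)
  have hS3 : ∑ a : ZMod (p^k), W a
      = ∑ j ∈ Finset.range n, (v (((j+1 : ℕ) : ℤ_[p])) - v ((j : ℕ) : ℤ_[p])) := by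
    refine Finset.sum_bij' (fun a _ => a.val) (fun j _ => ((j : ℕ) : ZMod (p^k)))
      (fun a _ => Finset.mem_range.mpr (ZMod.val_lt a))
      (fun j _ => Finset.mem_univ _)
      (fun a _ => ZMod.natCast_rightInverse a)
      (fun j hj => ZMod.val_cast_of_lt (Finset.mem_range.mp hj))
      (fun a _ => by simp only [hW]; push_cast; ring)
  have htel : ∑ j ∈ Finset.range n, (v (((j+1 : ℕ) : ℤ_[p])) - v ((j : ℕ) : ℤ_[p]))
      = v ((n : ℕ) : ℤ_[p]) - v ((0 : ℕ) : ℤ_[p]) :=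
    Finset.sum_range_sub (fun j : ℕ => v ((j : ℤ_[p]))) n
  have hvn : (p:ℤ_[p])^k ∣ v ((n : ℕ) : ℤ_[p]) - v ((0 : ℕ) : ℤ_[p]) := by
    apply compat_dvd hv k
    rw [hn]
    push_cast
    simp
  have hS : (p:ℤ_[p])^k ∣
      ∑ i ∈ Finset.range n, (v ((ff v c)^[i] z + 1) - v ((ff v c)^[i] z)) := by
    have hsplit : ∑ i ∈ Finset.range n, (v ((ff v c)^[i] z + 1) - v ((ff v c)^[i] z))
        = (∑ i ∈ Finset.range n, (v ((ff v c)^[i] z + 1) - v ((ff v c)^[i] z))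
            - ∑ i ∈ Finset.range n, W ((gf v c k)^[i] a0))
          + ∑ i ∈ Finset.range n, W ((gf v c k)^[i] a0) := by ring
    rw [hsplit]
    refine dvd_add hS1 ?_
    rw [hS2, hS3, htel]
    exact hvn
  obtain ⟨S', hS'⟩ := hS
  refine ⟨S', ?_⟩
  rw [ff_iter_eq, hS', hn]
  push_cast
  ring

private lemma main_trans {v : ℤ_[p] → ℤ_[p]} (hv : IsCompatible v) {c : ℤ_[p]}
    (hc : ¬ (p : ℤ_[p]) ∣ c) :
    ∀ k : ℕ, ∀ a b : ZMod (p^k), ∃ m : ℕ, (gf v c k)^[m] a = b := by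
  intro k
  induction k with
  | zero =>
    intro a b
    refine ⟨0, ?_⟩
    haveI : Subsingleton (ZMod (p^0)) := by rw [pow_zero]; infer_instance
    exact Subsingleton.elim _ _
  | succ k ih =>
    intro a b
    -- `c` is a unit
    have hcu : IsUnit c := PadicInt.isUnit_iff.mpr
      (le_antisymm c.norm_le_one
        (not_lt.mp fun h => hc ((PadicInt.norm_lt_one_iff_dvd c).mp h)))
    obtain ⟨u, hu⟩ := hcu
    have huc : ((u⁻¹ : ℤ_[p]ˣ) : ℤ_[p]) * c = 1 := by rw [← hu]; exact u.inv_mul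
    set x : ℤ_[p] := (a.val : ℤ_[p]) with hx
    set y : ℤ_[p] := (b.val : ℤ_[p]) with hy
    obtain ⟨i, hi⟩ := ih (PadicInt.toZModPow k x) (PadicInt.toZModPow k y)
    have hixy : PadicInt.toZModPow k ((ff v c)^[i] x) = PadicInt.toZModPow k y := by
      rw [← gf_iter hv, hi]
    obtain ⟨t, ht⟩ : (p:ℤ_[p])^k ∣ (ff v c)^[i] x - y :=
      (dvd_iff_toZModPow_eq k _ y).mpr hixy
    set w : ℤ_[p] := -t * ((u⁻¹ : ℤ_[p]ˣ) : ℤ_[p]) with hw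
    set j : ℕ := (PadicInt.toZModPow 1 w).val with hj
    have hjw : (p:ℤ_[p]) ∣ w - (j : ℤ_[p]) := by
      have h1 : (p:ℤ_[p])^1 ∣ w - (j : ℤ_[p]) :=
        (dvd_iff_toZModPow_eq 1 w (j : ℤ_[p])).mpr (by rw [hj, lift_spec])
      simpa [pow_one] using h1
    have hdj : (p:ℤ_[p]) ∣ t + (j : ℤ_[p]) * c := by
      have he : t + (j : ℤ_[p]) * c = -((w - (j : ℤ_[p])) * c) := by
        have hwc : w * c = -t := by
          rw [hw, mul_assoc, huc, mul_one]
        rw [sub_mul, hwc]; ring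
      rw [he]
      exact ((hjw.mul_right c).neg_right)
    have hjk : ∀ (jj : ℕ) (z : ℤ_[p]),
        (p:ℤ_[p])^(k+1) ∣ (ff v c)^[jj * p^k] z
          - (z + (jj : ℤ_[p]) * (p:ℤ_[p])^k * c) := by
      intro jj
      induction jj with
      | zero => intro z; simp
      | succ jj ihj =>
        intro z
        have h2 := key_step hv c k ih ((ff v c)^[jj * p^k] z)
        have h3 : (ff v c)^[(jj+1) * p^k] z
            = (ff v c)^[p^k] ((ff v c)^[jj * p^k] z) := by
          rw [← Function.iterate_add_apply, Nat.succ_mul, Nat.add_comm]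
        have h4 : (ff v c)^[p^k] ((ff v c)^[jj * p^k] z)
              - (z + ((jj+1 : ℕ) : ℤ_[p]) * (p:ℤ_[p])^k * c)
            = ((ff v c)^[p^k] ((ff v c)^[jj * p^k] z)
                - ((ff v c)^[jj * p^k] z + (p:ℤ_[p])^k * c))
              + ((ff v c)^[jj * p^k] z
                - (z + (jj : ℤ_[p]) * (p:ℤ_[p])^k * c)) := by
          push_cast; ring
        rw [h3, h4]
        exact dvd_add h2 (ihj z)
    refine ⟨j * p^k + i, ?_⟩
    have hm : (ff v c)^[j * p^k + i] x = (ff v c)^[j * p^k] ((ff v c)^[i] x) :=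
      Function.iterate_add_apply _ _ _ _
    have hd2 : (p:ℤ_[p])^(k+1) ∣
        ((ff v c)^[i] x + (j : ℤ_[p]) * (p:ℤ_[p])^k * c) - y := by
      have he : ((ff v c)^[i] x + (j : ℤ_[p]) * (p:ℤ_[p])^k * c) - y
          = (p:ℤ_[p])^k * (t + (j : ℤ_[p]) * c) := by
        rw [show ((ff v c)^[i] x + (j : ℤ_[p]) * (p:ℤ_[p])^k * c) - y
            = ((ff v c)^[i] x - y) + (j : ℤ_[p]) * (p:ℤ_[p])^k * c from by ring, ht]
        ring
      rw [he, pow_succ]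
      exact mul_dvd_mul_left _ hdj
    have hfin : (p:ℤ_[p])^(k+1) ∣ (ff v c)^[j * p^k + i] x - y := by
      rw [hm]
      have he : (ff v c)^[j * p^k] ((ff v c)^[i] x) - y
          = ((ff v c)^[j * p^k] ((ff v c)^[i] x)
              - ((ff v c)^[i] x + (j : ℤ_[p]) * (p:ℤ_[p])^k * c))
            + (((ff v c)^[i] x + (j : ℤ_[p]) * (p:ℤ_[p])^k * c) - y) := by ring
      rw [he]
      exact dvd_add (hjk j _) hd2
    have hgoal := (dvd_iff_toZModPow_eq (k+1) _ y).mp hfin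
    calc (gf v c (k+1))^[j * p^k + i] a
        = (gf v c (k+1))^[j * p^k + i] (PadicInt.toZModPow (k+1) x) := by
          rw [hx, lift_spec]
      _ = PadicInt.toZModPow (k+1) ((ff v c)^[j * p^k + i] x) := gf_iter hv c (k+1) _ x
      _ = PadicInt.toZModPow (k+1) y := hgoal
      _ = b := by rw [hy, lift_spec]

end Aux

theorem stmt2 {p : ℕ} [Fact p.Prime] (v : ℤ_[p] → ℤ_[p]) (hv : IsCompatible v)
    (c : ℤ_[p]) (hc : ¬ (p : ℤ_[p]) ∣ c) :
    ∀ k : ℕ, 1 ≤ k → TransitiveMod (fun x => c + x + p * (v (x + 1) - v x)) k := by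
  intro k _
  exact ⟨gf v c k, fun x => gf_spec hv c k x, main_trans hv hc k⟩
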